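/- arXiv:2207.02943 — 3 statements merged into one kernel-verified Lean document; each statement's English description precedes it below -/
import Mathlib

section
/- Let X be an n×p real matrix with full column rank and D an h×p real matrix with full row rank, h ≤ p. Then the trace of the matrix X(XᵀX)⁻¹Xᵀ − X(XᵀX)⁻¹Dᵀ(D(XᵀX)⁻¹Dᵀ)⁻¹D(XᵀX)⁻¹Xᵀ equals p − h. -/
open Matrix

lemma mulVec_inj_of_rank {a b : ℕ} (A : Matrix (Fin a) (Fin b) ℝ) (h : A.rank = b) :
    Function.Injective A.mulVec := by
  have hker : LinearMap.ker A.mulVecLin = ⊥ := by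
    have := A.mulVecLin.finrank_range_add_finrank_ker
    rw [show Module.finrank ℝ (LinearMap.range A.mulVecLin) = b from h,
      Module.finrank_fin_fun (R := ℝ)] at this
    have : Module.finrank ℝ (LinearMap.ker A.mulVecLin) = 0 := by omega
    exact Submodule.finrank_eq_zero.mp this
  exact LinearMap.ker_eq_bot.mp hker

lemma isUnit_of_rank_eq_card {m : ℕ} (A : Matrix (Fin m) (Fin m) ℝ) (h : A.rank = m) :
    IsUnit A :=
  mulVec_injective_iff_isUnit.mp (mulVec_inj_of_rank A h)

lemma posDef_mul_mul_transpose {a b : ℕ} (S : Matrix (Fin b) (Fin b) ℝ)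
    (hS : S.PosDef) (B : Matrix (Fin a) (Fin b) ℝ) (hB : Function.Injective Bᵀ.mulVec) :
    (B * S * Bᵀ).PosDef := by
  have hSt : Sᵀ = S := by
    exact (by simpa [conjTranspose_eq_transpose_of_trivial] using hS.isHermitian : S.IsSymm)
  rw [posDef_iff_dotProduct_mulVec]
  constructor
  · show (B * S * Bᵀ)ᴴ = B * S * Bᵀ
    simp [conjTranspose_eq_transpose_of_trivial, transpose_mul, hSt, Matrix.mul_assoc]
  · intro x hx
    have hBx : Bᵀ.mulVec x ≠ 0 := fun h => hx (hB (by simpa using h))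
    have := hS.dotProduct_mulVec_pos hBx
    simpa [dotProduct_mulVec, mulVec_mulVec, Matrix.mul_assoc, vecMul_transpose,
      ← mulVec_transpose] using this

theorem scm_constrained_ls_trace {n p h : ℕ} (hph : h ≤ p)
    (X : Matrix (Fin n) (Fin p) ℝ) (D : Matrix (Fin h) (Fin p) ℝ)
    (hX : X.rank = p) (hD : D.rank = h) :
    Matrix.trace
      (X * (Xᵀ * X)⁻¹ * Xᵀ -
        X * (Xᵀ * X)⁻¹ * Dᵀ * (D * (Xᵀ * X)⁻¹ * Dᵀ)⁻¹ * D * (Xᵀ * X)⁻¹ * Xᵀ)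
      = (p : ℝ) - (h : ℝ) := by
  set S := (Xᵀ * X)⁻¹ with hSdef
  -- XᵀX is a unit
  have hXX : IsUnit (Xᵀ * X) :=
    isUnit_of_rank_eq_card _ (by rw [rank_transpose_mul_self, hX])
  have hXXdet : IsUnit (Xᵀ * X).det := (isUnit_iff_isUnit_det _).mp hXX
  -- XᵀX is PosDef
  have hXinj : Function.Injective X.mulVec := mulVec_inj_of_rank X hX
  have hXXpd : (Xᵀ * X).PosDef := by
    rw [posDef_iff_dotProduct_mulVec]
    constructor
    · unfold Matrix.IsHermitian
      simp [conjTranspose_mul]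
    · intro x hx
      have hXx : X.mulVec x ≠ 0 := fun h0 => hx (hXinj (by simpa using h0))
      have : 0 < dotProduct (X.mulVec x) (star (X.mulVec x)) :=
        dotProduct_self_star_pos_iff.mpr hXx
      simpa [dotProduct_mulVec, ← vecMul_vecMul, vecMul_transpose] using this
  have hSpd : S.PosDef := hXXpd.inv
  -- M = D S Dᵀ is PosDef hence a unit
  have hDTinj : Function.Injective Dᵀ.mulVec :=
    mulVec_inj_of_rank Dᵀ (by rw [rank_transpose, hD])
  have hMpd : (D * S * Dᵀ).PosDef := posDef_mul_mul_transpose S hSpd D hDTinj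
  have hMdet : IsUnit (D * S * Dᵀ).det := (isUnit_iff_isUnit_det _).mp hMpd.isUnit
  have hSXX : S * (Xᵀ * X) = 1 := nonsing_inv_mul _ hXXdet
  -- first trace
  have h1 : Matrix.trace (X * S * Xᵀ) = (p : ℝ) := by
    rw [trace_mul_cycle, hSdef]
    rw [mul_nonsing_inv _ hXXdet, trace_one]
    simp
  -- second trace
  have h2 : Matrix.trace (X * S * Dᵀ * (D * S * Dᵀ)⁻¹ * D * S * Xᵀ) = (h : ℝ) := by
    have key : Xᵀ * (X * S * Dᵀ * (D * S * Dᵀ)⁻¹ * D * S) =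
        Dᵀ * ((D * S * Dᵀ)⁻¹ * (D * S)) := by
      have h0 : Xᵀ * (X * S) = 1 := by
        rw [← Matrix.mul_assoc, mul_nonsing_inv _ hXXdet]
      calc Xᵀ * (X * S * Dᵀ * (D * S * Dᵀ)⁻¹ * D * S)
          = (Xᵀ * (X * S)) * (Dᵀ * ((D * S * Dᵀ)⁻¹ * (D * S))) := by
            simp only [Matrix.mul_assoc]
        _ = Dᵀ * ((D * S * Dᵀ)⁻¹ * (D * S)) := by rw [h0, Matrix.one_mul]
    rw [trace_mul_comm, key, trace_mul_comm, Matrix.mul_assoc,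
      show D * S * Dᵀ = D * (S * Dᵀ) from Matrix.mul_assoc _ _ _,
      nonsing_inv_mul _ (by rwa [← Matrix.mul_assoc]), trace_one]
    simp
  rw [trace_sub, h1, h2]
end

section
/- With the setup of the penalized constrained least squares problem with equality constraint D = 1_pᵀ and Z = 1 (sum-to-one constraint), the Jacobian of the fitted values Y ↦ Xβ̂(Y) equals (1+λ)(Π − (1/(1ᵀG⁻¹1)) X G⁻¹ 1 1ᵀ G⁻¹ Xᵀ), where G = XᵀX and Π = X G⁻¹ Xᵀ; consequently its trace equals (1+λ)(p − 1). -/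
open Matrix

private lemma dp_mul {n p : ℕ} (X : Matrix (Fin n) (Fin p) ℝ) (a b : Fin p → ℝ) :
    (X *ᵥ a) ⬝ᵥ (X *ᵥ b) = a ⬝ᵥ ((Xᵀ * X) *ᵥ b) := by
  conv_rhs => rw [← mulVec_mulVec, dotProduct_mulVec, vecMul_transpose]

private lemma vmv_mulVec {n p : ℕ} (u : Fin n → ℝ) (v y : Fin p → ℝ) :
    vecMulVec u v *ᵥ y = (v ⬝ᵥ y) • u := by
  ext i
  simp only [vecMulVec_apply, mulVec, dotProduct, Pi.smul_apply, smul_eq_mul, Finset.sum_mul,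
    Finset.mul_sum]
  exact Finset.sum_congr rfl fun j _ => by ring

private lemma trace_vmv {p : ℕ} (u v : Fin p → ℝ) : trace (vecMulVec u v) = u ⬝ᵥ v := by
  simp [trace, vecMulVec_apply, dotProduct, diag]

private lemma isUnit_of_rank_eq {p : ℕ} (G : Matrix (Fin p) (Fin p) ℝ) (h : G.rank = p) :
    IsUnit G := by
  rw [← Matrix.mulVec_surjective_iff_isUnit]
  have hr : LinearMap.range G.mulVecLin = ⊤ := by
    apply Submodule.eq_top_of_finrank_eq
    rw [← Matrix.rank, h]
    simp
  intro y
  obtain ⟨x, hx⟩ := hr ▸ (Submodule.mem_top : y ∈ ⊤)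
  exact ⟨x, hx⟩

private lemma dp_self_nonneg {m : Type*} [Fintype m] (v : m → ℝ) : 0 ≤ v ⬝ᵥ v :=
  Finset.sum_nonneg fun i _ => mul_self_nonneg _


/-- Jacobian and trace (degrees of freedom) of the penalized synthetic control
fit with sum-to-one constraint (no covariates): (1+λ)(Π − b bᵀ/(1ᵀG⁻¹1)),
with trace (1+λ)(p−1). -/
theorem penalized_sum_to_one_jacobian {n p : ℕ}
    (X : Matrix (Fin n) (Fin p) ℝ) (hX : X.rank = p) (lam : ℝ) (hlam : 0 ≤ lam)
    (βhat : (Fin n → ℝ) → (Fin p → ℝ))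
    (hfeas : ∀ Y, ∑ i, βhat Y i = 1)
    (hmin : ∀ Y β, (∑ i, β i) = 1 →
      (1/2) * ((Y - X *ᵥ βhat Y) ⬝ᵥ (Y - X *ᵥ βhat Y))
        + (lam/2) * ∑ i, βhat Y i * ((Y - Xᵀ i) ⬝ᵥ (Y - Xᵀ i)) ≤
      (1/2) * ((Y - X *ᵥ β) ⬝ᵥ (Y - X *ᵥ β))
        + (lam/2) * ∑ i, β i * ((Y - Xᵀ i) ⬝ᵥ (Y - Xᵀ i))) :
    (∃ c : Fin n → ℝ, ∀ Y : Fin n → ℝ,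
      X *ᵥ βhat Y =
        ((1 + lam) • (X * (Xᵀ * X)⁻¹ * Xᵀ
          - (1 / ((1 : Fin p → ℝ) ⬝ᵥ ((Xᵀ * X)⁻¹ *ᵥ (1 : Fin p → ℝ)))) •
            vecMulVec (X *ᵥ ((Xᵀ * X)⁻¹ *ᵥ (1 : Fin p → ℝ)))
              (X *ᵥ ((Xᵀ * X)⁻¹ *ᵥ (1 : Fin p → ℝ))))) *ᵥ Y + c) ∧
    Matrix.trace
      ((1 + lam) • (X * (Xᵀ * X)⁻¹ * Xᵀ
        - (1 / ((1 : Fin p → ℝ) ⬝ᵥ ((Xᵀ * X)⁻¹ *ᵥ (1 : Fin p → ℝ)))) •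
          vecMulVec (X *ᵥ ((Xᵀ * X)⁻¹ *ᵥ (1 : Fin p → ℝ)))
            (X *ᵥ ((Xᵀ * X)⁻¹ *ᵥ (1 : Fin p → ℝ)))))
      = (1 + lam) * ((p : ℝ) - 1) := by
  have hp0 : p ≠ 0 := by
    intro h
    have h1 := hfeas 0
    subst h
    simpa using h1
  set G := Xᵀ * X with hGdef
  have hGu : IsUnit G :=
    isUnit_of_rank_eq G (by rw [hGdef, Matrix.rank_transpose_mul_self, hX])
  have hGdet : IsUnit G.det := (isUnit_iff_isUnit_det G).1 hGu
  have hGG : G * G⁻¹ = 1 := mul_nonsing_inv G hGdet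
  have hGsym : Gᵀ = G := by rw [hGdef, transpose_mul, transpose_transpose]
  have hGisym : (G⁻¹)ᵀ = G⁻¹ := by rw [transpose_nonsing_inv, hGsym]
  set w : Fin p → ℝ := G⁻¹ *ᵥ 1 with hw
  set s : ℝ := (1 : Fin p → ℝ) ⬝ᵥ w with hsdef
  set b : Fin n → ℝ := X *ᵥ w with hb
  have hsymdp : ∀ v u : Fin p → ℝ, v ⬝ᵥ (G *ᵥ u) = u ⬝ᵥ (G *ᵥ v) := by
    intro v u
    rw [dotProduct_mulVec, ← mulVec_transpose, hGsym, dotProduct_comm]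
  have hGw : G *ᵥ w = 1 := by rw [hw, mulVec_mulVec, hGG, one_mulVec]
  have hs0 : s ≠ 0 := by
    intro h
    have h1 : (X *ᵥ w) ⬝ᵥ (X *ᵥ w) = 0 := by
      rw [dp_mul, ← hGdef, hGw, dotProduct_comm, ← hsdef, h]
    have h2 : X *ᵥ w = 0 := dotProduct_self_eq_zero.mp h1
    have h3 : G *ᵥ w = 0 := by
      rw [hGdef, ← mulVec_mulVec, h2, mulVec_zero]
    rw [hGw] at h3
    exact one_ne_zero (congr_fun h3 ⟨0, Nat.pos_of_ne_zero hp0⟩)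
  set d : Fin p → ℝ := fun i => Xᵀ i ⬝ᵥ Xᵀ i with hd
  have hsum : ∀ v : Fin p → ℝ, ∑ i, v i = (1 : Fin p → ℝ) ⬝ᵥ v := by
    intro v; simp [dotProduct]
  have hone_dp : ∀ v : Fin p → ℝ, (1 : Fin p → ℝ) ⬝ᵥ (G⁻¹ *ᵥ v) = w ⬝ᵥ v := by
    intro v
    rw [dotProduct_mulVec, ← mulVec_transpose, hGisym, ← hw]
  constructor
  · refine ⟨(((lam/2) * (w ⬝ᵥ d) + 1)/s) • b - (lam/2) • (X *ᵥ (G⁻¹ *ᵥ d)), fun Y => ?_⟩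
    set t : Fin p → ℝ := Xᵀ *ᵥ Y with ht
    set μ : ℝ := ((1+lam) * (w ⬝ᵥ t) - (lam/2) * (w ⬝ᵥ d) - 1)/s with hμ
    set B : Fin p → ℝ := G⁻¹ *ᵥ ((1+lam) • t - (lam/2) • d - μ • 1) with hB
    have hGB : G *ᵥ B = (1+lam) • t - (lam/2) • d - μ • 1 := by
      rw [hB, mulVec_mulVec, hGG, one_mulVec]
    have hfeasB : ∑ i, B i = 1 := by
      rw [hsum, hB, hone_dp, dotProduct_sub, dotProduct_sub, dotProduct_smul, dotProduct_smul,
        dotProduct_smul, dotProduct_comm w 1, ← hsdef, hμ]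
      simp only [smul_eq_mul]
      field_simp
      ring
    set u : Fin p → ℝ := βhat Y - B with hu
    have hu1 : (1 : Fin p → ℝ) ⬝ᵥ u = 0 := by
      rw [hu, dotProduct_sub, ← hsum, ← hsum, hfeas Y, hfeasB, sub_self]
    have hAB : βhat Y = B + u := by rw [hu, add_sub_cancel]
    have h1 : ∀ β : Fin p → ℝ, β ⬝ᵥ t = (X *ᵥ β) ⬝ᵥ Y := by
      intro β; rw [ht, dotProduct_mulVec, vecMul_transpose]
    have expand : ∀ β : Fin p → ℝ, (Y - X *ᵥ β) ⬝ᵥ (Y - X *ᵥ β)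
        = Y ⬝ᵥ Y - 2 * (β ⬝ᵥ t) + β ⬝ᵥ (G *ᵥ β) := by
      intro β
      have e2 : Y ⬝ᵥ (X *ᵥ β) = β ⬝ᵥ t := by rw [dotProduct_comm, ← h1 β]
      rw [sub_dotProduct, dotProduct_sub, dotProduct_sub, dp_mul, ← hGdef, e2,
        show (X *ᵥ β) ⬝ᵥ Y = β ⬝ᵥ t from (h1 β).symm]
      ring
    have expandq : ∀ β : Fin p → ℝ, ∑ i, β i * ((Y - Xᵀ i) ⬝ᵥ (Y - Xᵀ i))
        = (∑ i, β i) * (Y ⬝ᵥ Y) - 2 * (β ⬝ᵥ t) + β ⬝ᵥ d := by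
      intro β
      have hqi : ∀ i, (Y - Xᵀ i) ⬝ᵥ (Y - Xᵀ i) = Y ⬝ᵥ Y - 2 * (Xᵀ i ⬝ᵥ Y) + d i := by
        intro i
        rw [sub_dotProduct, dotProduct_sub, dotProduct_sub, dotProduct_comm Y (Xᵀ i), hd]
        ring
      calc ∑ i, β i * ((Y - Xᵀ i) ⬝ᵥ (Y - Xᵀ i))
          = ∑ i, (β i * (Y ⬝ᵥ Y) - 2 * (β i * (Xᵀ i ⬝ᵥ Y)) + β i * d i) := by
            refine Finset.sum_congr rfl fun i _ => ?_; rw [hqi i]; ring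
        _ = (∑ i, β i) * (Y ⬝ᵥ Y) - 2 * (β ⬝ᵥ t) + β ⬝ᵥ d := by
            rw [Finset.sum_add_distrib, Finset.sum_sub_distrib, ← Finset.sum_mul,
              ← Finset.mul_sum]
            rfl
    have e1 : βhat Y ⬝ᵥ (G *ᵥ βhat Y)
        = B ⬝ᵥ (G *ᵥ B) + 2*(u ⬝ᵥ (G *ᵥ B)) + u ⬝ᵥ (G *ᵥ u) := by
      conv_lhs => rw [hAB]
      rw [add_dotProduct, mulVec_add, dotProduct_add, dotProduct_add, hsymdp B u]
      ring
    have e2 : βhat Y ⬝ᵥ t = B ⬝ᵥ t + u ⬝ᵥ t := by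
      conv_lhs => rw [hAB]
      rw [add_dotProduct]
    have e3 : βhat Y ⬝ᵥ d = B ⬝ᵥ d + u ⬝ᵥ d := by
      conv_lhs => rw [hAB]
      rw [add_dotProduct]
    have e4 : u ⬝ᵥ (G *ᵥ B) = (1+lam)*(u ⬝ᵥ t) - (lam/2)*(u ⬝ᵥ d) := by
      rw [hGB, dotProduct_sub, dotProduct_sub, dotProduct_smul, dotProduct_smul,
        dotProduct_smul, dotProduct_comm u 1, hu1]
      simp only [smul_eq_mul]
      ring
    have e5 : u ⬝ᵥ (G *ᵥ u) = (X *ᵥ u) ⬝ᵥ (X *ᵥ u) := by rw [dp_mul, ← hGdef]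
    have hle := hmin Y B hfeasB
    rw [expand (βhat Y), expand B, expandq (βhat Y), expandq B, hfeas Y, hfeasB] at hle
    have hQ0 : (X *ᵥ u) ⬝ᵥ (X *ᵥ u) ≤ 0 := by nlinarith [e1, e2, e3, e4, e5, hle]
    have hQ : (X *ᵥ u) ⬝ᵥ (X *ᵥ u) = 0 := le_antisymm hQ0 (dp_self_nonneg _)
    have hXu : X *ᵥ u = 0 := dotProduct_self_eq_zero.mp hQ
    have hXAB : X *ᵥ βhat Y = X *ᵥ B := by
      have h := hXu
      rw [hu, mulVec_sub, sub_eq_zero] at h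
      exact h
    rw [hXAB, hB]
    have hbY : b ⬝ᵥ Y = w ⬝ᵥ t := by
      rw [hb, dotProduct_comm, dotProduct_mulVec, ← mulVec_transpose, ← ht, dotProduct_comm]
    have hL : X *ᵥ (G⁻¹ *ᵥ ((1 + lam) • t - (lam / 2) • d - μ • 1))
        = (1 + lam) • ((X * G⁻¹ * Xᵀ) *ᵥ Y) - (lam / 2) • (X *ᵥ (G⁻¹ *ᵥ d)) - μ • b := by
      simp only [mulVec_sub, mulVec_smul]
      rw [ht, mulVec_mulVec, mulVec_mulVec, ← hw, ← hb]
    rw [hL, smul_mulVec, sub_mulVec, smul_mulVec, vmv_mulVec, hbY, hμ]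
    module
  · rw [trace_smul, trace_sub, trace_smul, trace_vmv]
    have hPi : trace (X * G⁻¹ * Xᵀ) = (p : ℝ) := by
      rw [trace_mul_comm, ← Matrix.mul_assoc, ← hGdef, hGG, trace_one, Fintype.card_fin]
    have hbb : b ⬝ᵥ b = s := by
      rw [hb, dp_mul, ← hGdef, hGw, dotProduct_comm w 1, ← hsdef]
    rw [hPi, hbb]
    simp only [smul_eq_mul]
    field_simp
end

section
/- Block matrix rank identity: Let A ∈ ℝ^{m×n}, B ∈ ℝ^{s×t}, C ∈ ℝ^{m×t}, and let A⁻ and B⁻ be generalized inverses satisfying AA⁻A = A and BB⁻B = B. Then rank of the block upper-triangular matrix [[A, C],[0, B]] equals rank(A) + rank(B) if and only if (I_m − AA⁻)C(I_t − B⁻B) = 0. -/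
open Matrix

private lemma rank_fromColumns_add {p a b : Type*} [Fintype p] [Fintype a] [Fintype b]
    (X : Matrix p a ℝ) (Y : Matrix p b ℝ) (P : Matrix p p ℝ)
    (hX : P * X = X) (hY : P * Y = 0) :
    (fromCols X Y).rank = X.rank + Y.rank := by
  have hrange : LinearMap.range (fromCols X Y).mulVecLin
      = LinearMap.range X.mulVecLin ⊔ LinearMap.range Y.mulVecLin := by
    apply le_antisymm
    · intro v hv
      obtain ⟨w, rfl⟩ := LinearMap.mem_range.mp hv
      have hw : (fromCols X Y).mulVecLin w
          = X.mulVecLin (w ∘ Sum.inl) + Y.mulVecLin (w ∘ Sum.inr) := by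
        have hw' : (fromCols X Y).mulVecLin w
            = fromCols X Y *ᵥ Sum.elim (w ∘ Sum.inl) (w ∘ Sum.inr) := by
          rw [mulVecLin_apply, Sum.elim_comp_inl_inr]
        rw [hw', fromCols_mulVec_sumElim, mulVecLin_apply, mulVecLin_apply]
      rw [hw]
      exact Submodule.add_mem_sup (LinearMap.mem_range_self _ _) (LinearMap.mem_range_self _ _)
    · rw [sup_le_iff]
      constructor
      · intro v hv
        obtain ⟨x, rfl⟩ := LinearMap.mem_range.mp hv
        exact ⟨Sum.elim x 0, by simp [mulVecLin_apply, fromCols_mulVec_sumElim]⟩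
      · intro v hv
        obtain ⟨y, rfl⟩ := LinearMap.mem_range.mp hv
        exact ⟨Sum.elim 0 y, by simp [mulVecLin_apply, fromCols_mulVec_sumElim]⟩
  have hinf : LinearMap.range X.mulVecLin ⊓ LinearMap.range Y.mulVecLin = ⊥ := by
    rw [eq_bot_iff]
    rintro v ⟨hvX, hvY⟩
    obtain ⟨x, hx⟩ := LinearMap.mem_range.mp hvX
    obtain ⟨y, hy⟩ := LinearMap.mem_range.mp hvY
    have h1 : P *ᵥ v = v := by
      rw [← hx]; simp only [mulVecLin_apply, mulVec_mulVec, hX]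
    have h2 : P *ᵥ v = 0 := by
      rw [← hy]; simp only [mulVecLin_apply, mulVec_mulVec, hY, zero_mulVec]
    simpa [h2] using h1.symm
  have hsum := Submodule.finrank_sup_add_finrank_inf_eq
    (LinearMap.range X.mulVecLin) (LinearMap.range Y.mulVecLin)
  rw [hinf, finrank_bot, add_zero] at hsum
  rw [Matrix.rank, Matrix.rank, Matrix.rank, hrange, hsum]

private lemma rank_eq_zero_iff' {p q : Type*} [Fintype p] [Fintype q] [DecidableEq q]
    (D : Matrix p q ℝ) : D.rank = 0 ↔ D = 0 := by
  constructor
  · intro h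
    have hbot : LinearMap.range D.mulVecLin = ⊥ := Submodule.finrank_eq_zero.mp h
    ext i j
    have hv : D.mulVecLin (Pi.single j 1) = 0 := by
      have := hbot ▸ LinearMap.mem_range_self D.mulVecLin (Pi.single j 1)
      simpa using this
    have := congrFun hv i
    simpa [mulVecLin_apply, mulVec_single] using this
  · rintro rfl; exact rank_zero

private lemma rank_fromRows_pair {p q b : Type*} [Fintype p] [Fintype q] [Fintype b]
    (D : Matrix p b ℝ) (B : Matrix q b ℝ) (Q : Matrix b b ℝ)
    (hD : D * Q = D) (hB : B * Q = 0) :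
    (fromRows D B).rank = D.rank + B.rank := by
  rw [← rank_transpose, transpose_fromRows, ← rank_transpose D, ← rank_transpose B]
  exact rank_fromColumns_add _ _ Qᵀ
    (by rw [← transpose_mul, hD]) (by rw [← transpose_mul, hB, transpose_zero])

theorem blockTriangular_rank_eq_iff {m n s t : ℕ}
    (A : Matrix (Fin m) (Fin n) ℝ) (B : Matrix (Fin s) (Fin t) ℝ)
    (C : Matrix (Fin m) (Fin t) ℝ)
    (Aminus : Matrix (Fin n) (Fin m) ℝ) (hA : A * Aminus * A = A)
    (Bminus : Matrix (Fin t) (Fin s) ℝ) (hB : B * Bminus * B = B) :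
    (Matrix.fromBlocks A C 0 B).rank = A.rank + B.rank ↔
      (1 - A * Aminus) * C * (1 - Bminus * B) = 0 := by
  have hAA : A * Aminus * (A * Aminus) = A * Aminus := by
    rw [← Matrix.mul_assoc (A * Aminus) A Aminus, hA]
  have hBB : Bminus * B * (Bminus * B) = Bminus * B := by
    rw [Matrix.mul_assoc Bminus B (Bminus * B), ← Matrix.mul_assoc B Bminus B, hB]
  have h0 : A * Aminus * (1 - A * Aminus) = 0 := by
    rw [Matrix.mul_sub, Matrix.mul_one, hAA, sub_self]
  have h1 : (1 - Bminus * B) * (Bminus * B) = 0 := by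
    rw [Matrix.sub_mul, Matrix.one_mul, hBB, sub_self]
  have hAD : A * Aminus * ((1 - A * Aminus) * C * (1 - Bminus * B)) = 0 := by
    rw [Matrix.mul_assoc (1 - A * Aminus) C (1 - Bminus * B),
      ← Matrix.mul_assoc (A * Aminus) (1 - A * Aminus) (C * (1 - Bminus * B)),
      h0, Matrix.zero_mul]
  have hDB : (1 - A * Aminus) * C * (1 - Bminus * B) * (Bminus * B) = 0 := by
    rw [Matrix.mul_assoc ((1 - A * Aminus) * C) (1 - Bminus * B) (Bminus * B),
      h1, Matrix.mul_zero]
  -- step 1: equivalence transformation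
  have step1 : fromBlocks A C 0 B * fromBlocks (1 : Matrix (Fin n) (Fin n) ℝ) (-(Aminus * C)) 0
        (1 : Matrix (Fin t) (Fin t) ℝ)
      = fromBlocks A ((1 - A * Aminus) * C) 0 B := by
    rw [fromBlocks_multiply, fromBlocks_inj]
    refine ⟨by simp, ?_, by simp, by simp⟩
    rw [Matrix.sub_mul, Matrix.one_mul, Matrix.mul_neg, ← Matrix.mul_assoc A Aminus C,
      Matrix.mul_one]
    abel
  have step2 : fromBlocks (1 : Matrix (Fin m) (Fin m) ℝ) (-((1 - A * Aminus) * C * Bminus)) 0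
          (1 : Matrix (Fin s) (Fin s) ℝ)
        * fromBlocks A ((1 - A * Aminus) * C) 0 B
      = fromBlocks A ((1 - A * Aminus) * C * (1 - Bminus * B)) 0 B := by
    rw [fromBlocks_multiply, fromBlocks_inj]
    refine ⟨by simp, ?_, by simp, by simp⟩
    rw [Matrix.one_mul, Matrix.neg_mul, Matrix.mul_sub, Matrix.mul_one,
      Matrix.mul_assoc ((1 - A * Aminus) * C) Bminus B]
    abel
  have hdetL : IsUnit (fromBlocks (1 : Matrix (Fin m) (Fin m) ℝ)
      (-((1 - A * Aminus) * C * Bminus)) 0 (1 : Matrix (Fin s) (Fin s) ℝ)).det := by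
    rw [det_fromBlocks_zero₂₁]; simp
  have hdetR : IsUnit (fromBlocks (1 : Matrix (Fin n) (Fin n) ℝ)
      (-(Aminus * C)) 0 (1 : Matrix (Fin t) (Fin t) ℝ)).det := by
    rw [det_fromBlocks_zero₂₁]; simp
  have hrank1 : (fromBlocks A C 0 B).rank
      = (fromBlocks A ((1 - A * Aminus) * C * (1 - Bminus * B)) 0 B).rank := by
    rw [← step2, ← step1, rank_mul_eq_right_of_isUnit_det _ _ hdetL,
      rank_mul_eq_left_of_isUnit_det _ _ hdetR]
  -- step 2: rank additivity for the reduced matrix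
  set D := (1 - A * Aminus) * C * (1 - Bminus * B) with hD
  have hblocks : fromBlocks A D 0 B = fromCols (fromRows A 0) (fromRows D B) :=
    (fromCols_fromRows_eq_fromBlocks A D 0 B).symm
  have hcols : (fromBlocks A D 0 B).rank = (fromRows A (0 : Matrix (Fin s) (Fin n) ℝ)).rank
      + (fromRows D B).rank := by
    rw [hblocks]
    refine rank_fromColumns_add _ _ (fromBlocks (A * Aminus) 0 0 0) ?_ ?_
    · rw [fromBlocks_mul_fromRows]
      simp [hA]
    · rw [fromBlocks_mul_fromRows]
      simp [hAD]
  have hA0 : (fromRows A (0 : Matrix (Fin s) (Fin n) ℝ)).rank = A.rank := by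
    rw [rank_fromRows_pair A 0 1 (by simp) (by simp), rank_zero, add_zero]
  have hDBrank : (fromRows D B).rank = D.rank + B.rank := by
    refine rank_fromRows_pair D B (1 - Bminus * B) ?_ ?_
    · rw [Matrix.mul_sub, Matrix.mul_one, hDB, sub_zero]
    · rw [Matrix.mul_sub, Matrix.mul_one, ← Matrix.mul_assoc B Bminus B, hB, sub_self]
  have htotal : (fromBlocks A C 0 B).rank = A.rank + (D.rank + B.rank) := by
    rw [hrank1, hcols, hA0, hDBrank]
  rw [htotal]
  constructor
  · intro h
    have : D.rank = 0 := by omega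
    exact (rank_eq_zero_iff' D).mp this
  · intro h
    rw [h, rank_zero, zero_add]
end
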